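/- For every bounded convex open set D ⊂ ℝⁿ there is a constant c(D) > 0 such that for every function f that is three times continuously differentiable on a neighborhood of D̄: (sup_{D̄} ‖D²f‖)² ≤ c(D) · (sup_{D̄} ‖Df‖) · (sup_{D̄} ‖D³f‖ + sup_{D̄} ‖D²f‖). -/

import Mathlib

open Set

/-- Supremum of a real-valued function over a set. -/
noncomputable def supOn {X : Type*} (S : Set X) (g : X → ℝ) : ℝ := sSup (g '' S)

/-- Elementary interpolation algebra: if `M₂ ≤ a·M₁/l + b·M₃·l` for all `l ∈ (0,1]`,
then `M₂² ≤ (2a+4ab)·M₁·(M₃+M₂)`. -/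
theorem interp_algebra (a b M1 M2 M3 : ℝ) (ha : 0 < a) (hb : 0 < b)
    (hM1 : 0 ≤ M1) (hM2 : 0 ≤ M2) (hM3 : 0 ≤ M3)
    (H : ∀ l : ℝ, 0 < l → l ≤ 1 → M2 ≤ a * M1 / l + b * M3 * l) :
    M2 ^ 2 ≤ (2 * a + 4 * a * b) * M1 * (M3 + M2) := by
  rcases eq_or_lt_of_le hM2 with h0 | hM2pos
  · rw [← h0]
    have h1 : ((0:ℝ)) ^ 2 = 0 := by norm_num
    rw [h1]
    positivity
  have hden : 0 < 2 * b * (M3 + M2) := by positivity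
  set l0 : ℝ := M2 / (2 * b * (M3 + M2)) with hl0
  have hl0pos : 0 < l0 := by positivity
  have heq : l0 * (2 * b * (M3 + M2)) = M2 := div_mul_cancel₀ _ (ne_of_gt hden)
  rcases le_or_gt l0 1 with hle | hgt
  · have key := H l0 hl0pos hle
    have key' : M2 * l0 ≤ a * M1 + b * M3 * l0 ^ 2 := by
      have h2 := mul_le_mul_of_nonneg_right key (le_of_lt hl0pos)
      have h3 : (a * M1 / l0 + b * M3 * l0) * l0 = a * M1 + b * M3 * l0 ^ 2 := by
        field_simp
      rw [h3] at h2
      linarith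
    have h4 : b * M3 * l0 ^ 2 ≤ b * (M3 + M2) * l0 * l0 := by
      have hpos : 0 ≤ b * M2 * l0 ^ 2 := by positivity
      nlinarith [hpos]
    have h5 : b * (M3 + M2) * l0 = M2 / 2 := by linarith [heq]
    have h6 : M2 * l0 ≤ a * M1 + (M2 / 2) * l0 := by nlinarith
    have h7 : M2 * l0 / 2 ≤ a * M1 := by nlinarith
    -- multiply by 2*b*(M3+M2)
    have h8 := mul_le_mul_of_nonneg_left h7 (le_of_lt hden)
    have h9 : 2 * b * (M3 + M2) * (M2 * l0 / 2) = M2 * M2 / 2 := by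
      have : M2 * l0 * (2 * b * (M3 + M2)) = M2 * M2 := by
        calc M2 * l0 * (2 * b * (M3 + M2)) = M2 * (l0 * (2 * b * (M3 + M2))) := by ring
          _ = M2 * M2 := by rw [heq]
      linarith [this]
    rw [h9] at h8
    nlinarith
  · have key := H 1 one_pos le_rfl
    rw [div_one, mul_one] at key
    have h2 : 2 * b * (M3 + M2) < M2 := by
      rw [hl0, lt_div_iff₀ hden] at hgt; linarith
    have h3 : b * M3 < M2 / 2 := by nlinarith
    have h4 : M2 < 2 * a * M1 := by linarith
    nlinarith

set_option maxHeartbeats 1000000 in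
/-- interior interpolation inequality (e3.4). On a bounded convex open set,
`(sup ‖D²f‖)² ≤ c(D) · sup ‖Df‖ · (sup ‖D³f‖ + sup ‖D²f‖)`. -/
theorem hessian_interpolation_inequality
    {n : ℕ} (hn : 1 ≤ n) (D : Set (EuclideanSpace ℝ (Fin n)))
    (hD : IsOpen D) (hDconv : Convex ℝ D) (hDbd : Bornology.IsBounded D)
    (hDne : D.Nonempty) :
    ∃ c > (0:ℝ), ∀ (f : EuclideanSpace ℝ (Fin n) → ℝ)
      (U : Set (EuclideanSpace ℝ (Fin n))), IsOpen U → closure D ⊆ U →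
      ContDiffOn ℝ 3 f U →
      (supOn (closure D) fun x => ‖iteratedFDeriv ℝ 2 f x‖) ^ 2 ≤
        c * (supOn (closure D) fun x => ‖iteratedFDeriv ℝ 1 f x‖) *
          ((supOn (closure D) fun x => ‖iteratedFDeriv ℝ 3 f x‖) +
            (supOn (closure D) fun x => ‖iteratedFDeriv ℝ 2 f x‖)) := by
  classical
  obtain ⟨z, hz⟩ := hDne
  obtain ⟨ρ, hρ, hball⟩ := Metric.isOpen_iff.mp hD z hz
  set r : ℝ := ρ / 2 with hrdef
  have hr0 : 0 < r := by positivity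
  have hballr : Metric.closedBall z r ⊆ D := fun w hw =>
    hball (lt_of_le_of_lt (Metric.mem_closedBall.mp hw) (by simp [hrdef]; linarith))
  obtain ⟨d, hd0, hdsub⟩ := hDbd.closure.subset_closedBall_lt 0 z
  set L : ℝ := d + r with hLdef
  have hL0 : 0 < L := by positivity
  set a : ℝ := 2 / r with hadef
  set b : ℝ := L ^ 2 / r with hbdef
  have ha0 : 0 < a := by positivity
  have hb0 : 0 < b := by positivity
  refine ⟨2 * a + 4 * a * b, by positivity, ?_⟩
  intro f U hU hDU hf
  set K := closure D with hKdef
  have hKne : K.Nonempty := ⟨z, subset_closure hz⟩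
  have hKconv : Convex ℝ K := hDconv.closure
  have hKc : IsCompact K := hDbd.isCompact_closure
  -- the three sup quantities
  set F : ℕ → EuclideanSpace ℝ (Fin n) → ℝ := fun k x => ‖iteratedFDeriv ℝ k f x‖ with hFdef
  have hcont : ∀ k : ℕ, (k : WithTop ℕ∞) ≤ 3 → ContinuousOn (F k) K := by
    intro k hk
    have h1 : ContinuousOn (iteratedFDerivWithin ℝ k f U) U :=
      hf.continuousOn_iteratedFDerivWithin hk hU.uniqueDiffOn
    have h2 : ContinuousOn (iteratedFDeriv ℝ k f) U :=
      h1.congr fun x hx => (iteratedFDerivWithin_of_isOpen k hU hx).symm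
    exact (h2.mono hDU).norm
  have hbdd : ∀ k : ℕ, (k : WithTop ℕ∞) ≤ 3 → BddAbove (F k '' K) := fun k hk =>
    (hKc.bddAbove_image (hcont k hk))
  have hle : ∀ k : ℕ, (k : WithTop ℕ∞) ≤ 3 → ∀ x ∈ K, F k x ≤ supOn K (F k) := by
    intro k hk x hx
    exact le_csSup (hbdd k hk) ⟨x, hx, rfl⟩
  have hMnonneg : ∀ k : ℕ, (k : WithTop ℕ∞) ≤ 3 → 0 ≤ supOn K (F k) := by
    intro k hk
    obtain ⟨x0, hx0⟩ := hKne
    exact le_trans (norm_nonneg _) (hle k hk x0 hx0)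
  set M1 := supOn K (F 1) with hM1def
  set M2 := supOn K (F 2) with hM2def
  set M3 := supOn K (F 3) with hM3def
  have hM1n : 0 ≤ M1 := hMnonneg 1 (by norm_num)
  have hM2n : 0 ≤ M2 := hMnonneg 2 (by norm_num)
  have hM3n : 0 ≤ M3 := hMnonneg 3 (by norm_num)
  -- derivative functions
  set g := fderiv ℝ f with hgdef
  set g' := fderiv ℝ g with hg'def
  set g'' := fderiv ℝ g' with hg''def
  have hn1 : ∀ x, ‖g x‖ = F 1 x := by
    intro x
    rw [hFdef]
    simp only [hgdef]
    rw [← norm_iteratedFDeriv_fderiv, norm_iteratedFDeriv_zero]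
  have hn2 : ∀ x, ‖g' x‖ = F 2 x := by
    intro x
    rw [hFdef]
    simp only [hg'def, hgdef]
    rw [← norm_iteratedFDeriv_fderiv, ← norm_iteratedFDeriv_fderiv,
      norm_iteratedFDeriv_zero]
  letI : NormedAddCommGroup (EuclideanSpace ℝ (Fin n) →L[ℝ] ℝ) := ContinuousLinearMap.toNormedAddCommGroup
  letI : NormedSpace ℝ (EuclideanSpace ℝ (Fin n) →L[ℝ] ℝ) := ContinuousLinearMap.toNormedSpace
  have hn3 : ∀ x, ‖g'' x‖ = F 3 x := by
    intro x
    rw [hFdef]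
    simp only [hg''def, hg'def, hgdef]
    rw [← norm_iteratedFDeriv_fderiv, ← norm_iteratedFDeriv_fderiv,
      ← norm_iteratedFDeriv_fderiv, norm_iteratedFDeriv_zero]
  have hgc : ContDiffOn ℝ 2 g U := hf.fderiv_of_isOpen hU (by norm_num)
  have hg'c : ContDiffOn ℝ 1 g' U := hgc.fderiv_of_isOpen hU (by norm_num)
  have hgdiff : ∀ t ∈ U, HasFDerivAt g (g' t) t := by
    intro t ht
    exact ((hgc.differentiableOn (by norm_num)).differentiableAt
      (hU.mem_nhds ht)).hasFDerivAt
  have hg'diff : ∀ t ∈ U, HasFDerivAt g' (g'' t) t := by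
    intro t ht
    exact ((hg'c.differentiableOn (by norm_num)).differentiableAt
      (hU.mem_nhds ht)).hasFDerivAt
  -- Main: for every l ∈ (0,1], M2 ≤ a*M1/l + b*M3*l
  have key : ∀ l : ℝ, 0 < l → l ≤ 1 → M2 ≤ a * M1 / l + b * M3 * l := by
    intro l hl0 hl1
    have hRHS : 0 ≤ a * M1 / l + b * M3 * l := by positivity
    rw [hM2def, supOn]
    refine Real.sSup_le ?_ hRHS
    rintro _ ⟨x, hx, rfl⟩
    rw [← hn2 x]
    -- Taylor estimate at x
    have taylor : ∀ y ∈ K, ‖g y - g x - (g' x) (y - x)‖ ≤ M3 * (‖y - x‖ * ‖y - x‖) := by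
      intro y hy
      set s := segment ℝ x y with hsdef
      have hsK : s ⊆ K := hKconv.segment_subset hx hy
      have hsU : s ⊆ U := hsK.trans hDU
      have step1 : ∀ t ∈ s, ‖g' t - g' x‖ ≤ M3 * ‖y - x‖ := by
        intro t ht
        have h1 : ‖g' t - g' x‖ ≤ M3 * ‖t - x‖ := by
          refine Convex.norm_image_sub_le_of_norm_hasFDerivWithin_le
            (fun u hu => (hg'diff u (hsU hu)).hasFDerivWithinAt)
            (fun u hu => by rw [hn3 u]; exact hle 3 (by norm_num) u (hsK hu))
            (convex_segment x y) (left_mem_segment ℝ x y) ht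
        have h2 : ‖t - x‖ ≤ ‖y - x‖ := by
          obtain ⟨s1, s2, hs1, hs2, hsum, hteq⟩ := ht
          have : t - x = s2 • (y - x) := by
            rw [← hteq]
            have : s1 = 1 - s2 := by linarith
            rw [this]
            module
          rw [this, norm_smul, Real.norm_eq_abs, abs_of_nonneg hs2]
          exact mul_le_of_le_one_left (norm_nonneg _) (by linarith)
        calc ‖g' t - g' x‖ ≤ M3 * ‖t - x‖ := h1
          _ ≤ M3 * ‖y - x‖ := mul_le_mul_of_nonneg_left h2 hM3n
      have step2 := Convex.norm_image_sub_le_of_norm_hasFDerivWithin_le'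
        (fun u hu => (hgdiff u (hsU hu)).hasFDerivWithinAt)
        step1 (convex_segment x y) (left_mem_segment ℝ x y) (right_mem_segment ℝ x y)
      calc ‖g y - g x - (g' x) (y - x)‖ ≤ M3 * ‖y - x‖ * ‖y - x‖ := step2
        _ = M3 * (‖y - x‖ * ‖y - x‖) := by ring
    have hApt : ∀ y ∈ K, ‖(g' x) (y - x)‖ ≤ 2 * M1 + M3 * (‖y - x‖ * ‖y - x‖) := by
      intro y hy
      have h1 := taylor y hy
      have h2 : ‖g y‖ ≤ M1 := by rw [hn1]; exact hle 1 (by norm_num) y hy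
      have h3 : ‖g x‖ ≤ M1 := by rw [hn1]; exact hle 1 (by norm_num) x hx
      have h4 : ‖(g' x) (y - x)‖ ≤ ‖g y - g x - (g' x) (y - x)‖ + ‖g y‖ + ‖g x‖ := by
        have := norm_sub_le (g y - g x) (g y - g x - (g' x) (y - x))
        have h5 : (g y - g x) - (g y - g x - (g' x) (y - x)) = (g' x) (y - x) := by abel
        calc ‖(g' x) (y - x)‖ = ‖(g y - g x) - (g y - g x - (g' x) (y - x))‖ := by rw [h5]
          _ ≤ ‖g y - g x‖ + ‖g y - g x - (g' x) (y - x)‖ := norm_sub_le _ _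
          _ ≤ (‖g y‖ + ‖g x‖) + ‖g y - g x - (g' x) (y - x)‖ := by
              have := norm_sub_le (g y) (g x); linarith
          _ = ‖g y - g x - (g' x) (y - x)‖ + ‖g y‖ + ‖g x‖ := by ring
      linarith
    -- operator norm bound
    refine ContinuousLinearMap.opNorm_le_bound _ hRHS ?_
    intro v
    rcases eq_or_ne v 0 with rfl | hv
    · simp
    have hvn : (0:ℝ) < ‖v‖ := norm_pos_iff.mpr hv
    set e := ‖v‖⁻¹ • v with hedef
    have he : ‖e‖ = 1 := by
      rw [hedef, norm_smul, norm_inv, norm_norm, inv_mul_cancel₀ (ne_of_gt hvn)]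
    set wp := z + r • e with hwp
    set wm := z - r • e with hwm
    have hwpK : wp ∈ K := subset_closure (hballr (by
      rw [Metric.mem_closedBall, hwp, dist_eq_norm]
      simp [norm_smul, he, abs_of_pos hr0]))
    have hwmK : wm ∈ K := subset_closure (hballr (by
      rw [Metric.mem_closedBall, hwm, dist_eq_norm]
      simp [norm_smul, he, abs_of_pos hr0]))
    set yp := (1 - l) • x + l • wp with hyp
    set ym := (1 - l) • x + l • wm with hym
    have hypK : yp ∈ K := hKconv hx hwpK (by linarith) (le_of_lt hl0) (by ring)
    have hymK : ym ∈ K := hKconv hx hwmK (by linarith) (le_of_lt hl0) (by ring)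
    have hzx : ‖z - x‖ ≤ d := by
      have := hdsub hx
      rw [Metric.mem_closedBall, dist_eq_norm] at this
      rw [← norm_neg]; simpa [neg_sub] using this
    have hppn : ‖yp - x‖ ≤ l * L := by
      have h1 : yp - x = l • ((z - x) + r • e) := by rw [hyp, hwp]; module
      rw [h1, norm_smul, Real.norm_eq_abs, abs_of_pos hl0]
      have : ‖(z - x) + r • e‖ ≤ d + r := by
        calc ‖(z - x) + r • e‖ ≤ ‖z - x‖ + ‖r • e‖ := norm_add_le _ _
          _ ≤ d + r := by rw [norm_smul, Real.norm_eq_abs, abs_of_pos hr0, he]; simp; linarith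
      rw [hLdef]
      exact mul_le_mul_of_nonneg_left this (le_of_lt hl0)
    have hpmn : ‖ym - x‖ ≤ l * L := by
      have h1 : ym - x = l • ((z - x) - r • e) := by rw [hym, hwm]; module
      rw [h1, norm_smul, Real.norm_eq_abs, abs_of_pos hl0]
      have : ‖(z - x) - r • e‖ ≤ d + r := by
        calc ‖(z - x) - r • e‖ ≤ ‖z - x‖ + ‖r • e‖ := norm_sub_le _ _
          _ ≤ d + r := by rw [norm_smul, Real.norm_eq_abs, abs_of_pos hr0, he]; simp; linarith
      rw [hLdef]
      exact mul_le_mul_of_nonneg_left this (le_of_lt hl0)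
    have hAp : ‖(g' x) (yp - x)‖ ≤ 2 * M1 + M3 * (l * L) ^ 2 := by
      have h0 := hApt yp hypK
      have h2 : ‖yp - x‖ * ‖yp - x‖ ≤ (l * L) ^ 2 := by
        calc ‖yp - x‖ * ‖yp - x‖ ≤ (l * L) * (l * L) :=
              mul_self_le_mul_self (norm_nonneg _) hppn
          _ = (l * L) ^ 2 := (sq (l * L)).symm
      have h3 : M3 * (‖yp - x‖ * ‖yp - x‖) ≤ M3 * (l * L) ^ 2 :=
        mul_le_mul_of_nonneg_left h2 hM3n
      linarith
    have hAm : ‖(g' x) (ym - x)‖ ≤ 2 * M1 + M3 * (l * L) ^ 2 := by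
      have h0 := hApt ym hymK
      have h2 : ‖ym - x‖ * ‖ym - x‖ ≤ (l * L) ^ 2 := by
        calc ‖ym - x‖ * ‖ym - x‖ ≤ (l * L) * (l * L) :=
              mul_self_le_mul_self (norm_nonneg _) hpmn
          _ = (l * L) ^ 2 := (sq (l * L)).symm
      have h3 : M3 * (‖ym - x‖ * ‖ym - x‖) ≤ M3 * (l * L) ^ 2 :=
        mul_le_mul_of_nonneg_left h2 hM3n
      linarith
    have hdiff : (yp - x) - (ym - x) = (2 * l * r) • e := by
      rw [hyp, hym, hwp, hwm]; module
    have hvsmul : v = (‖v‖ * (2 * l * r)⁻¹) • ((2 * l * r) • e) := by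
      rw [smul_smul]
      have h2lr : (2 * l * r) ≠ 0 := by positivity
      rw [mul_assoc, inv_mul_cancel₀ h2lr, mul_one, hedef, smul_smul,
        mul_inv_cancel₀ (ne_of_gt hvn), one_smul]
    have hcomp : ‖(g' x) v‖ ≤ (‖v‖ * (2 * l * r)⁻¹) * (4 * M1 + 2 * M3 * (l * L) ^ 2) := by
      have h1 : (g' x) v = (‖v‖ * (2 * l * r)⁻¹) • ((g' x) ((yp - x) - (ym - x))) := by
        conv_lhs => rw [hvsmul]
        rw [map_smul, hdiff]
      rw [h1, norm_smul, Real.norm_eq_abs, abs_of_pos (by positivity)]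
      have h2 : ‖(g' x) ((yp - x) - (ym - x))‖ ≤ 4 * M1 + 2 * M3 * (l * L) ^ 2 := by
        rw [map_sub]
        calc ‖(g' x) (yp - x) - (g' x) (ym - x)‖
            ≤ ‖(g' x) (yp - x)‖ + ‖(g' x) (ym - x)‖ := norm_sub_le _ _
          _ ≤ 4 * M1 + 2 * M3 * (l * L) ^ 2 := by linarith
      have h3 : (0:ℝ) ≤ ‖v‖ * (2 * l * r)⁻¹ := by positivity
      exact mul_le_mul_of_nonneg_left h2 h3
    calc ‖(g' x) v‖ ≤ (‖v‖ * (2 * l * r)⁻¹) * (4 * M1 + 2 * M3 * (l * L) ^ 2) := hcomp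
      _ = (a * M1 / l + b * M3 * l) * ‖v‖ := by
          rw [hadef, hbdef]
          field_simp
          ring
  exact interp_algebra a b M1 M2 M3 ha0 hb0 hM1n hM2n hM3n key
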